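/- arXiv:0909.2430 — 6 statements merged into one kernel-verified Lean document; each statement's English description precedes it below -/
import Mathlib

section
/- Let G be a totally ordered abelian group (written multiplicatively), let g ∈ G, and let α = {a₁,…,aₙ} be a finite subset of elements all strictly less than the identity 1. Then there exists a finite set μ of elements of G all strictly less than 1, and an element of the form μ^m (a product of integer powers of elements of μ), such that the set g·α* (where α* is the submonoid generated by α) is contained in the set {μ^k : k ∈ ℤⁿ, k ≥ m componentwise}. -/
/-- The grid `J^{μ,m}` generated by ratios `μ : Fin k → G` with offsets `m : Fin k → ℤ`:
all products `∏ μᵢ^{cᵢ}` with `cᵢ ≥ mᵢ`. -/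
def grid {G : Type*} [CommGroup G] {k : ℕ} (μ : Fin k → G) (m : Fin k → ℤ) : Set G :=
  {h | ∃ c : Fin k → ℤ, (∀ i, m i ≤ c i) ∧ h = ∏ i, μ i ^ c i}

lemma closure_mem_prod {G : Type*} [CommGroup G] (α : Finset G) (x : G)
    (hx : x ∈ Submonoid.closure (α : Set G)) :
    ∃ c : Fin α.card → ℕ, x = ∏ i, ((α.equivFin.symm i : G)) ^ c i := by
  induction hx using Submonoid.closure_induction with
  | mem a ha =>
      exact ⟨Pi.single (α.equivFin ⟨a, ha⟩) 1, by
        simp [Pi.single_apply, Finset.prod_ite_eq', pow_ite]⟩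
  | one => exact ⟨0, by simp⟩
  | mul a b _ _ iha ihb =>
      obtain ⟨c, hc⟩ := iha
      obtain ⟨d, hd⟩ := ihb
      exact ⟨c + d, by simp [hc, hd, pow_add, Finset.prod_mul_distrib]⟩

/-- If `g ∈ G` and `α` is a finite set of elements `< 1`, then `g·α*` is contained in some
grid `J^{μ,m}` with `μ` a finite set of elements `< 1`. -/
theorem stmt0 {G : Type*} [CommGroup G] [LinearOrder G] [IsOrderedMonoid G] (g : G) (α : Finset G)
    (hα : ∀ x ∈ α, x < 1) :
    ∃ (k : ℕ) (μ : Fin k → G) (m : Fin k → ℤ),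
      (∀ i, μ i < 1) ∧
      (fun x => g * x) '' (Submonoid.closure (α : Set G) : Set G) ⊆ grid μ m := by
  by_cases hG : ∃ h : G, h < 1
  · obtain ⟨h, hh⟩ := hG
    set v : G := min 1 g⁻¹ * h with hv
    set u : G := g * v with hu
    have hv1 : v < 1 := lt_of_le_of_lt (by
      calc min 1 g⁻¹ * h ≤ 1 * h := mul_le_mul_left (min_le_left _ _) h
      _ = h := one_mul h) hh
    have hu1 : u < 1 := by
      have : u ≤ h := by
        calc g * (min 1 g⁻¹ * h) ≤ g * (g⁻¹ * h) :=
          mul_le_mul_right (mul_le_mul_left (min_le_right _ _) h) g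
        _ = h := by group
      exact lt_of_le_of_lt this hh
    set n := α.card
    refine ⟨n + 2, Fin.cons u (Fin.cons v fun i => (α.equivFin.symm i : G)),
      fun _ => -1, ?_, ?_⟩
    · intro i
      refine Fin.cases ?_ (fun j => Fin.cases ?_ (fun j' => ?_) j) i
      · exact hu1
      · exact hv1
      · exact hα _ (α.equivFin.symm j').2
    · rintro x ⟨y, hy, rfl⟩
      obtain ⟨c, hc⟩ := closure_mem_prod α y hy
      refine ⟨Fin.cons 1 (Fin.cons (-1) fun i => (c i : ℤ)), ?_, ?_⟩
      · intro i
        refine Fin.cases ?_ (fun j => Fin.cases ?_ (fun j' => ?_) j) i <;> simp <;> omega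
      · simp only [Fin.prod_univ_succ, Fin.cons_zero, Fin.cons_succ, zpow_one,
          zpow_neg_one, zpow_natCast]
        rw [← hc, hu]
        group
  · push_neg at hG
    have hall : ∀ x : G, x = 1 :=
      fun x => le_antisymm (one_le_inv'.mp (hG x⁻¹)) (hG x)
    refine ⟨0, Fin.elim0, Fin.elim0, fun i => i.elim0, ?_⟩
    rintro x ⟨y, hy, rfl⟩
    exact ⟨Fin.elim0, fun i => i.elim0, by simp [hall (g * y)]⟩
end

section
/- In a totally ordered abelian group G, given two grids J^{μ,m} and J^{ν,n} (with μ, ν finite sets of elements strictly less than 1), there exists a third grid J^{α,p} containing both. -/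
/-- Given two grids, there is a third grid containing them both. -/
theorem stmt1 {G : Type*} [CommGroup G] [LinearOrder G] [IsOrderedMonoid G]
    {k l : ℕ} (μ : Fin k → G) (m : Fin k → ℤ) (ν : Fin l → G) (n : Fin l → ℤ)
    (hμ : ∀ i, μ i < 1) (hν : ∀ i, ν i < 1) :
    ∃ (r : ℕ) (α : Fin r → G) (p : Fin r → ℤ),
      (∀ i, α i < 1) ∧ grid μ m ⊆ grid α p ∧ grid ν n ⊆ grid α p := by
  refine ⟨k + l, Fin.append μ ν, Fin.append (fun i => min (m i) 0) (fun j => min (n j) 0),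
    ?_, ?_, ?_⟩
  · intro i
    induction i using Fin.addCases with
    | left j => ?_
    | right j => ?_
    · rw [Fin.append_left]; exact hμ j
    · rw [Fin.append_right]; exact hν j
  · rintro x ⟨c, hc, rfl⟩
    refine ⟨Fin.append c 0, ?_, ?_⟩
    · intro i
      induction i using Fin.addCases with
    | left j => ?_
    | right j => ?_
      · rw [Fin.append_left, Fin.append_left]
        exact le_trans (min_le_left _ _) (hc j)
      · rw [Fin.append_right, Fin.append_right]
        exact min_le_right _ _
    · rw [Fin.prod_univ_add]
      simp [Fin.append_left, Fin.append_right]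
  · rintro x ⟨c, hc, rfl⟩
    refine ⟨Fin.append 0 c, ?_, ?_⟩
    · intro i
      induction i using Fin.addCases with
    | left j => ?_
    | right j => ?_
      · rw [Fin.append_left, Fin.append_left]
        exact min_le_right _ _
      · rw [Fin.append_right, Fin.append_right]
        exact le_trans (min_le_left _ _) (hc j)
    · rw [Fin.prod_univ_add]
      simp [Fin.append_left, Fin.append_right]
end

section
/- (Subgrid Witness Theorem) Let G be a totally ordered abelian group, μ = {μ₁,…,μₙ} a finite set of elements of G strictly less than 1, and A a nonempty subset of a grid J^{μ,m}. If A has a maximum element g, then there exists a finite set α of elements of the subgroup generated by μ, each strictly less than 1, such that A ⊆ g·α*, where α* is the submonoid generated by α. -/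
/-- The set of minimal elements of any subset of `ℕⁿ` is finite (Dickson's lemma). -/
lemma grid_min_finite {n : ℕ} (T : Set (Fin n → ℕ)) :
    {c | Minimal (· ∈ T) c}.Finite := by
  have hpwo : ({c | Minimal (· ∈ T) c} : Set (Fin n → ℕ)).IsPWO := by
    have h := Set.isPWO_of_wellQuasiOrderedLE
      (Finsupp.equivFunOnFinite ⁻¹' {c | Minimal (· ∈ T) c} : Set (Fin n →₀ ℕ))
    have himg : Finsupp.equivFunOnFinite '' (Finsupp.equivFunOnFinite ⁻¹' {c | Minimal (· ∈ T) c})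
        = {c | Minimal (· ∈ T) c} :=
      Finsupp.equivFunOnFinite.image_preimage _
    rw [← himg]
    exact Set.PartiallyWellOrderedOn.image_of_monotone_on h fun a _ b _ hab => hab
  exact (setOf_minimal_antichain _).finite_of_partiallyWellOrderedOn hpwo

/-- Every element of a subset of `ℕⁿ` lies above some minimal element. -/
lemma grid_min_exists {n : ℕ} (T : Set (Fin n → ℕ)) {c : Fin n → ℕ} (hc : c ∈ T) :
    ∃ t, Minimal (· ∈ T) t ∧ t ≤ c := by
  classical
  set P : ℕ → Prop := fun N => ∃ t : Fin n → ℕ, t ∈ T ∧ t ≤ c ∧ ∑ i, t i = N with hP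
  have hPc : P (∑ i, c i) := ⟨c, hc, le_refl _, rfl⟩
  obtain ⟨t, htT, htc, hts⟩ := Nat.find_spec (⟨_, hPc⟩ : ∃ N, P N)
  refine ⟨t, ⟨htT, ?_⟩, htc⟩
  intro u huT hut
  have huc : u ≤ c := le_trans hut htc
  have hule : ∑ i, u i ≤ ∑ i, t i := Finset.sum_le_sum fun i _ => hut i
  have hge : Nat.find (⟨_, hPc⟩ : ∃ N, P N) ≤ ∑ i, u i :=
    Nat.find_le ⟨u, huT, huc, rfl⟩
  rw [← hts] at hge
  have hsum : ∑ i, u i = ∑ i, t i := le_antisymm hule hge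
  have := (Finset.sum_eq_sum_iff_of_le (fun i _ => Pi.le_def.mp hut i)).mp hsum
  intro i
  exact (this i (Finset.mem_univ i)).ge

/-- Key lemma: a finite set `α` of elements `< 1` in the subgroup generated by `μ`
such that every `∏ μᵢ^{kᵢ} ≤ 1` with `k ≥ b` lies in the monoid generated by `α`. -/
lemma grid_key {G : Type*} [CommGroup G] [LinearOrder G] [IsOrderedMonoid G] {n : ℕ}
    (μ : Fin n → G) (hμ : ∀ i, μ i < 1) (b : Fin n → ℤ) :
    ∃ α : Finset G, (∀ x ∈ α, x < 1) ∧
      (α : Set G) ⊆ (Subgroup.closure (Set.range μ) : Set G) ∧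
      ∀ k : Fin n → ℤ, (∀ i, b i ≤ k i) → (∏ i, μ i ^ k i) ≤ 1 →
        (∏ i, μ i ^ k i) ∈ Submonoid.closure (α : Set G) := by
  classical
  -- basic facts
  have hmem : ∀ k : Fin n → ℤ, (∏ i, μ i ^ k i) ∈ Subgroup.closure (Set.range μ) :=
    fun k => Subgroup.prod_mem _ fun i _ =>
      Subgroup.zpow_mem _ (Subgroup.subset_closure (Set.mem_range_self i)) _
  have hle1 : ∀ c : Fin n → ℕ, (∏ i, μ i ^ (c i : ℤ)) ≤ 1 := by
    intro c
    refine Finset.prod_le_one' fun i _ => ?_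
    rw [zpow_natCast]
    exact pow_le_one' (hμ i).le _
  -- the two sets of exponents
  set T₁ : Set (Fin n → ℕ) := {c | (∏ i, μ i ^ (b i + (c i : ℤ))) < 1} with hT₁
  set T₂ : Set (Fin n → ℕ) := {c | (∏ i, μ i ^ (c i : ℤ)) < 1} with hT₂
  set f₁ : (Fin n → ℕ) → G := fun c => ∏ i, μ i ^ (b i + (c i : ℤ)) with hf₁
  set f₂ : (Fin n → ℕ) → G := fun c => ∏ i, μ i ^ (c i : ℤ) with hf₂
  set α : Finset G :=
    (grid_min_finite T₁).toFinset.image f₁ ∪ (grid_min_finite T₂).toFinset.image f₂ with hα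
  have hα₁ : ∀ c, Minimal (· ∈ T₁) c → f₁ c ∈ α := by
    intro c hc
    exact Finset.mem_union_left _ (Finset.mem_image_of_mem _ ((grid_min_finite T₁).mem_toFinset.mpr hc))
  have hα₂ : ∀ c, Minimal (· ∈ T₂) c → f₂ c ∈ α := by
    intro c hc
    exact Finset.mem_union_right _ (Finset.mem_image_of_mem _ ((grid_min_finite T₂).mem_toFinset.mpr hc))
  refine ⟨α, ?_, ?_, ?_⟩
  · -- all < 1
    intro x hx
    rcases Finset.mem_union.mp hx with h | h <;>
    · obtain ⟨c, hc, rfl⟩ := Finset.mem_image.mp h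
      exact ((Set.Finite.mem_toFinset _).mp hc).prop
  · -- in the subgroup closure
    intro x hx
    rcases Finset.mem_union.mp hx with h | h <;>
    · obtain ⟨c, _, rfl⟩ := Finset.mem_image.mp h
      exact hmem _
  · -- the main containment
    -- Stage 2: nonnegative exponents
    have stage2 : ∀ N (c : Fin n → ℕ), (∑ i, c i) = N →
        (∏ i, μ i ^ (c i : ℤ)) ∈ Submonoid.closure (α : Set G) := by
      intro N
      induction N using Nat.strong_induction_on with
      | _ N ih =>
        intro c hcN
        rcases lt_or_eq_of_le (hle1 c) with hlt | heq
        · -- c ∈ T₂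
          obtain ⟨t, htmin, htc⟩ := grid_min_exists T₂ hlt
          have htne : ∃ j, 0 < t j := by
            by_contra h
            push_neg at h
            have ht0 : t = 0 := funext fun i => Nat.le_zero.mp (h i)
            have : (∏ i, μ i ^ ((t i : ℤ))) = 1 := by
              rw [ht0]; simp
            exact absurd this (ne_of_lt htmin.prop)
          obtain ⟨j, hj⟩ := htne
          have hsplit : (∏ i, μ i ^ (c i : ℤ)) =
              (∏ i, μ i ^ (t i : ℤ)) * ∏ i, μ i ^ ((c i - t i : ℕ) : ℤ) := by
            rw [← Finset.prod_mul_distrib]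
            refine Finset.prod_congr rfl fun i _ => ?_
            rw [← zpow_add]
            congr 1
            have := Nat.add_sub_cancel' (htc i)
            omega
          rw [hsplit]
          refine mul_mem (Submonoid.subset_closure (hα₂ t htmin)) ?_
          refine ih (∑ i, (c i - t i)) ?_ _ rfl
          rw [← hcN]
          refine Finset.sum_lt_sum (fun i _ => Nat.sub_le _ _) ⟨j, Finset.mem_univ j, ?_⟩
          have := Pi.le_def.mp htc j
          omega
        · rw [heq]; exact one_mem _
    -- Stage 1
    intro k hk hk1
    rcases lt_or_eq_of_le hk1 with hlt | heq
    · set c : Fin n → ℕ := fun i => (k i - b i).toNat with hc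
      have hbc : ∀ i, b i + (c i : ℤ) = k i := by
        intro i
        have := hk i
        simp only [hc, Int.toNat_of_nonneg (by omega : (0:ℤ) ≤ k i - b i)]
        omega
      have hcT : c ∈ T₁ := by
        show (∏ i, μ i ^ (b i + (c i : ℤ))) < 1
        simpa only [hbc] using hlt
      obtain ⟨t, htmin, htc⟩ := grid_min_exists T₁ hcT
      have hsplit : (∏ i, μ i ^ k i) =
          (∏ i, μ i ^ (b i + (t i : ℤ))) * ∏ i, μ i ^ ((c i - t i : ℕ) : ℤ) := by
        rw [← Finset.prod_mul_distrib]
        refine Finset.prod_congr rfl fun i _ => ?_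
        rw [← zpow_add]
        congr 1
        have h1 := hbc i
        have h2 := Pi.le_def.mp htc i
        omega
      rw [hsplit]
      exact mul_mem (Submonoid.subset_closure (hα₁ t htmin)) (stage2 _ _ rfl)
    · rw [heq]; exact one_mem _

/-- Subgrid Witness Theorem: if `A` is a nonempty subset of a grid `J^{μ,m}` with maximum
element `g`, then there is a finite set `α` of elements of the subgroup generated by `μ`,
each `< 1`, with `A ⊆ g·α*`. -/
theorem stmt2 {G : Type*} [CommGroup G] [LinearOrder G] [IsOrderedMonoid G]
    {n : ℕ} (μ : Fin n → G) (hμ : ∀ i, μ i < 1) (m : Fin n → ℤ)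
    (A : Set G) (hA : A ⊆ grid μ m) (g : G) (hgA : g ∈ A) (hmax : ∀ a ∈ A, a ≤ g) :
    ∃ α : Finset G,
      (∀ x ∈ α, x < 1) ∧
      (α : Set G) ⊆ (Subgroup.closure (Set.range μ) : Set G) ∧
      A ⊆ (fun x => g * x) '' (Submonoid.closure (α : Set G) : Set G) := by
  obtain ⟨d, hmd, hgd⟩ := hA hgA
  obtain ⟨α, hα1, hα2, hα3⟩ := grid_key μ hμ (fun i => m i - d i)
  refine ⟨α, hα1, hα2, ?_⟩
  intro a ha
  obtain ⟨c, hmc, hac⟩ := hA ha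
  have hsplit : a * g⁻¹ = ∏ i, μ i ^ (c i - d i) := by
    rw [hac, hgd, ← Finset.prod_inv_distrib, ← Finset.prod_mul_distrib]
    exact Finset.prod_congr rfl fun i _ => (zpow_sub _ _ _).symm
  have hmem : (∏ i, μ i ^ (c i - d i)) ∈ Submonoid.closure (α : Set G) := by
    refine hα3 _ (fun i => by have := hmc i; have := hmd i; omega) ?_
    rw [← hsplit, ← div_eq_mul_inv]
    exact div_le_one'.mpr (hmax a ha)
  exact ⟨a * g⁻¹, hsplit ▸ hmem, by show g * (a * g⁻¹) = a; rw [mul_comm a g⁻¹, mul_inv_cancel_left]⟩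
end

section
/- There is no finite set μ of small monomials (elements strictly less than 1 in the ordered group of monomials x^r, r ∈ ℝ, ordered so that x^r < 1 iff r < 0) such that the set A = {x^{-1/2}, x^{-2/3}, x^{-3/4}, …} = {x^{-n/(n+1)} : n ≥ 1} satisfies A ⊆ μ⁺ (i.e., every element of A is a nonempty product of elements of μ). Equivalently: for the ordered group ℝ under addition, there is no finite set μ of negative reals such that every number -n/(n+1) (n ≥ 1) is a finite sum of elements of μ. -/
/-- `μ⁺` additively: the set of finite nonempty sums of elements of `s`. -/
def addPlus (s : Set ℝ) : Set ℝ :=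
  {x | ∃ a ∈ s, ∃ b ∈ AddSubmonoid.closure s, x = a + b}

/-- There is no finite set `μ` of negative reals such that every number `-n/(n+1)` (n ≥ 1)
is a finite nonempty sum of elements of `μ`. -/
theorem stmt8 (μ : Finset ℝ) (hμ : ∀ x ∈ μ, x < 0) :
    ¬ (∀ n : ℕ, 1 ≤ n → (-((n : ℝ) / ((n : ℝ) + 1))) ∈ addPlus (μ : Set ℝ)) := by
  classical
  intro h
  -- μ is nonempty
  obtain ⟨a0, ha0, -⟩ := h 1 le_rfl
  have hne : μ.Nonempty := ⟨a0, ha0⟩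
  set m : ℝ := μ.max' hne with hm
  have hmμ : m ∈ μ := μ.max'_mem hne
  have hm0 : m < 0 := hμ m hmμ
  set K : ℕ := ⌈1 / (-m)⌉₊ with hK
  -- every -n/(n+1) is a sum of a list over μ of length ≤ K
  have key : ∀ n : ℕ, 1 ≤ n → ∃ l : List ℝ,
      (∀ y ∈ l, y ∈ μ) ∧ l.length ≤ K ∧ l.sum = -((n : ℝ) / ((n : ℝ) + 1)) := by
    intro n hn
    obtain ⟨a, ha, b, hb, hab⟩ := h n hn
    obtain ⟨l, hl, hlsum⟩ := AddSubmonoid.exists_list_of_mem_closure hb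
    refine ⟨a :: l, ?_, ?_, ?_⟩
    · intro y hy
      rcases List.mem_cons.mp hy with rfl | hy
      · exact ha
      · exact hl y hy
    · -- length bound
      have hle : ∀ y ∈ (a :: l), y ≤ m := by
        intro y hy
        rcases List.mem_cons.mp hy with rfl | hy
        · exact μ.le_max' y ha
        · exact μ.le_max' y (hl y hy)
      have hsum_le : (a :: l).sum ≤ (a :: l).length • m :=
        List.sum_le_card_nsmul _ _ hle
      have hsum : (a :: l).sum = -((n : ℝ) / ((n : ℝ) + 1)) := by
        simp [hlsum, hab]
      have hgt : (-1 : ℝ) < (a :: l).sum := by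
        rw [hsum]
        have h1 : (n : ℝ) / ((n : ℝ) + 1) < 1 := by
          rw [div_lt_one (by positivity)]
          linarith
        linarith
      -- len • m > -1 → len < 1/(-m) ≤ K
      set L := (a :: l).length with hL
      have h2 : (-1 : ℝ) < (L : ℝ) * m := by
        have := hsum_le
        rw [nsmul_eq_mul] at this
        linarith
      have h3 : (L : ℝ) * (-m) < 1 := by linarith
      have h4 : (L : ℝ) < 1 / (-m) := by
        rw [lt_div_iff₀ (by linarith)]
        linarith
      have h5 : (L : ℝ) < (K : ℝ) + 1 := by
        have := Nat.le_ceil (1 / (-m))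
        calc (L : ℝ) < 1 / (-m) := h4
          _ ≤ (K : ℝ) := this
          _ < (K : ℝ) + 1 := by linarith
      have : L < K + 1 := by exact_mod_cast h5
      omega
    · simp [hlsum, hab]
  -- finite set of possible values
  set F : Finset ℝ := (Finset.range (K + 1)).biUnion
      (fun k => (μ.sym k).image (fun s : Sym ℝ k => Multiset.sum s.toMultiset)) with hF
  have hmemF : ∀ n : ℕ, 1 ≤ n → (-((n : ℝ) / ((n : ℝ) + 1))) ∈ F := by
    intro n hn
    obtain ⟨l, hl, hlen, hsum⟩ := key n hn
    rw [hF, Finset.mem_biUnion]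
    refine ⟨l.length, Finset.mem_range.mpr (by omega), ?_⟩
    rw [Finset.mem_image]
    refine ⟨Sym.mk (l : Multiset ℝ) (Multiset.coe_card l), ?_, ?_⟩
    · rw [Finset.mem_sym_iff]
      intro y hy
      exact hl y (by simpa using hy)
    · simpa using hsum
  -- the set {-n/(n+1) : n ≥ 1} is infinite
  have hinj : Function.Injective (fun n : ℕ => -(((n : ℝ) + 1) / (((n : ℝ) + 1) + 1))) := by
    intro a b hab
    simp only [neg_inj] at hab
    have ha1 : ((a : ℝ) + 1) + 1 ≠ 0 := by positivity
    have hb1 : ((b : ℝ) + 1) + 1 ≠ 0 := by positivity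
    rw [div_eq_div_iff ha1 hb1] at hab
    have : (a : ℝ) = b := by ring_nf at hab; nlinarith [hab]
    exact_mod_cast this
  have hsub : ∀ n : ℕ, (fun n : ℕ => -(((n : ℝ) + 1) / (((n : ℝ) + 1) + 1))) n ∈ (F : Set ℝ) := by
    intro n
    simp only [Finset.mem_coe]
    have := hmemF (n + 1) (by omega)
    push_cast at this ⊢
    convert this using 3 <;> push_cast <;> ring
  have hinf : (F : Set ℝ).Infinite :=
    Set.infinite_of_injective_forall_mem hinj hsub
  exact hinf F.finite_toSet
end

section
/- Let G be a totally ordered abelian group, μ a finite set of elements strictly less than 1, and J^{μ,m} a grid. For any infinite sequence g₁, g₂, g₃, … of distinct elements of J^{μ,m}, there exist indices i < j with gⱼ ∈ gᵢ·μ⁺ (i.e., gⱼ ≺^μ gᵢ). In particular, every grid is well-ordered under the reverse of the group order restricted to it (no infinite strictly increasing sequence). -/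
/-- `μ⁺`: the set of nonempty products of elements of `s`. -/
def mulPlus {G : Type*} [CommMonoid G] (s : Set G) : Set G :=
  {x | ∃ a ∈ s, ∃ b ∈ Submonoid.closure s, x = a * b}

lemma zpow_mem_closure {G : Type*} [CommGroup G] {n : ℕ} (μ : Fin n → G) (i : Fin n)
    {k : ℤ} (hk : 0 ≤ k) : μ i ^ k ∈ Submonoid.closure (Set.range μ) := by
  lift k to ℕ using hk
  rw [zpow_natCast]
  exact pow_mem (Submonoid.subset_closure (Set.mem_range_self i)) k

lemma closure_le_one {G : Type*} [CommGroup G] [LinearOrder G] [IsOrderedMonoid G] {s : Set G}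
    (hs : ∀ x ∈ s, x < 1) {b : G} (hb : b ∈ Submonoid.closure s) : b ≤ 1 := by
  induction hb using Submonoid.closure_induction with
  | mem x hx => exact (hs x hx).le
  | one => exact le_rfl
  | mul x y _ _ hx hy =>
      calc x * y ≤ 1 * 1 := mul_le_mul' hx hy
        _ = 1 := one_mul 1

lemma prod_zpow_mem_mulPlus {G : Type*} [CommGroup G] {n : ℕ} (μ : Fin n → G)
    {e : Fin n → ℤ} (he : ∀ i, 0 ≤ e i) {i₀ : Fin n} (hi₀ : e i₀ ≠ 0) :
    (∏ i, μ i ^ e i) ∈ mulPlus (Set.range μ) := by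
  refine ⟨μ i₀, Set.mem_range_self i₀,
    μ i₀ ^ (e i₀ - 1) * ∏ i ∈ Finset.univ.erase i₀, μ i ^ e i, ?_, ?_⟩
  · exact mul_mem (zpow_mem_closure μ i₀ (by have := he i₀; omega))
      (prod_mem fun i _ => zpow_mem_closure μ i (he i))
  · rw [← Finset.mul_prod_erase Finset.univ _ (Finset.mem_univ i₀), ← mul_assoc]
    congr 1
    conv_lhs => rw [show e i₀ = 1 + (e i₀ - 1) by omega]
    rw [zpow_add, zpow_one]

/-- In any infinite sequence of distinct elements of a grid, some later term is obtained
from an earlier one by multiplying by a nonempty product of ratios; in particular a grid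
contains no strictly increasing infinite sequence. -/
theorem stmt9 {G : Type*} [CommGroup G] [LinearOrder G] [IsOrderedMonoid G]
    {n : ℕ} (μ : Fin n → G) (hμ : ∀ i, μ i < 1) (m : Fin n → ℤ) :
    (∀ g : ℕ → G, Function.Injective g → (∀ k, g k ∈ grid μ m) →
      ∃ i j : ℕ, i < j ∧ ∃ p ∈ mulPlus (Set.range μ), g j = g i * p) ∧
    (∀ g : ℕ → G, (∀ k, g k ∈ grid μ m) → ¬ StrictMono g) := by
  have main : ∀ g : ℕ → G, Function.Injective g → (∀ k, g k ∈ grid μ m) →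
      ∃ i j : ℕ, i < j ∧ ∃ p ∈ mulPlus (Set.range μ), g j = g i * p := by
    intro g hinj hmem
    simp only [grid, Set.mem_setOf_eq] at hmem
    choose c hc hgc using hmem
    set d : ℕ → Fin n → ℕ := fun k i => (c k i - m i).toNat with hd
    obtain ⟨i, j, hij, hle⟩ : ∃ i j, i < j ∧ d i ≤ d j := Set.isPWO_of_wellQuasiOrderedLE
      (Set.univ : Set (Fin n → ℕ)) (fun k => ⟨d k, Set.mem_univ _⟩)
    have hcle : ∀ x, c i x ≤ c j x := by
      intro x
      have h1 := hle x
      simp only [hd] at h1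
      have h2 := hc i x
      have h3 := hc j x
      omega
    refine ⟨i, j, hij, ?_⟩
    have hprod : g j = g i * ∏ x, μ x ^ (c j x - c i x) := by
      rw [hgc i, hgc j, ← Finset.prod_mul_distrib]
      refine Finset.prod_congr rfl fun x _ => ?_
      rw [← zpow_add]
      congr 1
      omega
    have hne : ∃ x, c j x - c i x ≠ 0 := by
      by_contra h
      push_neg at h
      apply hinj.ne hij.ne
      rw [hgc i, hgc j]
      refine Finset.prod_congr rfl fun x _ => ?_
      have := h x
      congr 1
      omega
    obtain ⟨x₀, hx₀⟩ := hne
    exact ⟨_, prod_zpow_mem_mulPlus μ (fun x => by have := hcle x; omega) hx₀, hprod⟩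
  refine ⟨main, fun g hmem hmono => ?_⟩
  obtain ⟨i, j, hij, p, hp, hgj⟩ := main g hmono.injective hmem
  obtain ⟨a, ha, b, hb, rfl⟩ := hp
  have hp1 : a * b < 1 := by
    calc a * b ≤ a * 1 := mul_le_mul_right (closure_le_one (by rintro x ⟨y, rfl⟩; exact hμ y) hb) a
      _ = a := mul_one a
      _ < 1 := by obtain ⟨y, rfl⟩ := ha; exact hμ y
  have : g j < g i := by
    rw [hgj]
    calc g i * (a * b) < g i * 1 := mul_lt_mul_right hp1 (g i)
      _ = g i := mul_one _
  exact absurd (hmono hij) (not_lt.mpr this.le)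
end

section
/- For the set μ = {-1, -√2} of negative reals with μ* = {-j - k√2 : j,k ∈ ℕ}, there is no finite set α of negative reals such that for all j, k ∈ ℕ with j - k√2 < 0, the number j - k√2 lies in α⁺ (the set of finite nonempty sums of elements of α). In other words, the negative numbers of the form j - k√2 get arbitrarily close to 0, so cannot all be witnessed by one finite ratio set. -/
private lemma irr_k_sqrt2 {k : ℕ} (hk : 0 < k) : Irrational ((k : ℝ) * Real.sqrt 2) :=
  irrational_sqrt_two.natCast_mul hk.ne'

private lemma fract_pos {k : ℕ} (hk : 0 < k) : 0 < Int.fract ((k : ℝ) * Real.sqrt 2) := by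
  rcases (Int.fract_nonneg ((k : ℝ) * Real.sqrt 2)).lt_or_eq with h | h
  · exact h
  · exfalso
    have hne := (irr_k_sqrt2 hk).ne_int ⌊(k : ℝ) * Real.sqrt 2⌋
    rw [eq_comm, Int.fract, sub_eq_zero] at h
    exact hne h

private lemma exists_small_fract (ε : ℝ) (hε : 0 < ε) :
    ∃ k : ℕ, 0 < k ∧ Int.fract ((k : ℝ) * Real.sqrt 2) < ε := by
  rcases lt_or_ge ε 1 with hε1 | hε1
  swap
  · exact ⟨1, one_pos, (Int.fract_lt_one _).trans_le hε1⟩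
  obtain ⟨n, hn⟩ := exists_nat_gt (2 / ε)
  have hn0 : 0 < n := by
    have : (0 : ℝ) < (n : ℝ) := lt_trans (by positivity) hn
    exact_mod_cast this
  obtain ⟨j, k, hk0, hkn, hjk⟩ := Real.exists_int_int_abs_mul_sub_le (Real.sqrt 2) hn0
  obtain ⟨K, rfl⟩ : ∃ K : ℕ, (K : ℤ) = k := ⟨k.toNat, Int.toNat_of_nonneg hk0.le⟩
  have hK0 : 0 < K := by exact_mod_cast hk0
  have hKr : ((K : ℤ) : ℝ) = (K : ℝ) := by push_cast; ring
  rw [hKr] at hjk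
  have hsmall : |(K : ℝ) * Real.sqrt 2 - j| < ε / 2 := by
    refine hjk.trans_lt ?_
    have h2 : (0 : ℝ) < 2 / ε := by positivity
    have := one_div_lt_one_div_of_lt h2 (hn.trans (lt_add_one _))
    rwa [one_div_div] at this
  set x : ℝ := (K : ℝ) * Real.sqrt 2 - j with hx
  clear_value x
  have hxne : x ≠ 0 := fun h => (irr_k_sqrt2 hK0).ne_int j (by rw [hx, sub_eq_zero] at h; exact h)
  rcases hxne.lt_or_gt with hneg | hpos
  · -- x < 0 : amplify.  y = -x ∈ (0, ε/2)
    set y : ℝ := -x with hy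
    clear_value y
    have hy0 : 0 < y := by simp [hy]; linarith
    have hyε : y < ε / 2 := by
      have := abs_lt.mp hsmall
      simp only [hy, hx]; linarith [this.1]
    obtain ⟨m, hm0, hmy1, hmy2⟩ : ∃ m : ℕ, 0 < m ∧ 1 - ε / 2 < (m : ℝ) * y ∧ (m : ℝ) * y < 1 := by
      refine ⟨⌊(1 - ε / 2) / y⌋.toNat + 1, Nat.succ_pos _, ?_, ?_⟩
      · have hfl0 : (0 : ℤ) ≤ ⌊(1 - ε / 2) / y⌋ :=
          Int.floor_nonneg.mpr (div_nonneg (by linarith) hy0.le)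
        have h5 : ((⌊(1 - ε / 2) / y⌋.toNat : ℕ) : ℤ) = ⌊(1 - ε / 2) / y⌋ :=
          Int.toNat_of_nonneg hfl0
        have hmc : ((⌊(1 - ε / 2) / y⌋.toNat + 1 : ℕ) : ℝ) = (⌊(1 - ε / 2) / y⌋ : ℝ) + 1 := by
          rw [Nat.cast_add, Nat.cast_one, ← Int.cast_natCast, h5]
        rw [hmc]
        have h1 : (1 - ε / 2) / y < (⌊(1 - ε / 2) / y⌋ : ℝ) + 1 := Int.lt_floor_add_one _
        calc (1 : ℝ) - ε / 2 = ((1 - ε / 2) / y) * y := (div_mul_cancel₀ _ hy0.ne').symm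
        _ < ((⌊(1 - ε / 2) / y⌋ : ℝ) + 1) * y := mul_lt_mul_of_pos_right h1 hy0
      · have hfl0 : (0 : ℤ) ≤ ⌊(1 - ε / 2) / y⌋ :=
          Int.floor_nonneg.mpr (div_nonneg (by linarith) hy0.le)
        have h5 : ((⌊(1 - ε / 2) / y⌋.toNat : ℕ) : ℤ) = ⌊(1 - ε / 2) / y⌋ :=
          Int.toNat_of_nonneg hfl0
        have hmc : ((⌊(1 - ε / 2) / y⌋.toNat + 1 : ℕ) : ℝ) = (⌊(1 - ε / 2) / y⌋ : ℝ) + 1 := by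
          rw [Nat.cast_add, Nat.cast_one, ← Int.cast_natCast, h5]
        rw [hmc]
        have h2 : (⌊(1 - ε / 2) / y⌋ : ℝ) ≤ (1 - ε / 2) / y := Int.floor_le _
        have h3 : ((⌊(1 - ε / 2) / y⌋ : ℝ) + 1) * y ≤ ((1 - ε / 2) / y + 1) * y :=
          mul_le_mul_of_nonneg_right (by linarith) hy0.le
        have h4 : ((1 - ε / 2) / y + 1) * y = (1 - ε / 2) + y := by
          rw [add_mul, div_mul_cancel₀ _ hy0.ne', one_mul]
        linarith
    refine ⟨m * K, Nat.mul_pos hm0 hK0, ?_⟩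
    have hrw : ((m * K : ℕ) : ℝ) * Real.sqrt 2 = -((m : ℝ) * y) + ((m * j : ℤ) : ℝ) := by
      push_cast
      simp only [hy, hx]
      ring
    rw [hrw, Int.fract_add_intCast]
    have hself : Int.fract ((m : ℝ) * y) = (m : ℝ) * y :=
      Int.fract_eq_self.mpr ⟨by positivity, hmy2⟩
    have hne0 : Int.fract ((m : ℝ) * y) ≠ 0 := by rw [hself]; nlinarith
    rw [Int.fract_neg hne0, hself]
    linarith
  · -- x > 0 : fract (K√2) = x < ε/2
    refine ⟨K, hK0, ?_⟩
    have habs := abs_lt.mp hsmall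
    have hx1 : x < 1 := by linarith [habs.2]
    have hrw : (K : ℝ) * Real.sqrt 2 = x + j := by simp [hx]
    rw [hrw, Int.fract_add_intCast, Int.fract_eq_self.mpr ⟨hpos.le, hx1⟩]
    linarith [habs.2]

/-- There is no finite set `α` of negative reals such that every negative number of the
form `j - k√2` (j, k ∈ ℕ) is a finite nonempty sum of elements of `α`. -/
theorem stmt11 (α : Finset ℝ) (hα : ∀ x ∈ α, x < 0) :
    ¬ (∀ j k : ℕ, (j : ℝ) - (k : ℝ) * Real.sqrt 2 < 0 →
        (j : ℝ) - (k : ℝ) * Real.sqrt 2 ∈ addPlus (α : Set ℝ)) := by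
  intro H
  have hsqrt2 : (0 : ℝ) < Real.sqrt 2 := by positivity
  rcases α.eq_empty_or_nonempty with rfl | hne
  · obtain ⟨a, ha, -⟩ := H 0 1 (by simpa using hsqrt2)
    simp at ha
  · set M := α.max' hne with hM
    have hM0 : M < 0 := hα _ (α.max'_mem hne)
    have hbound : ∀ x ∈ addPlus (α : Set ℝ), x ≤ M := by
      rintro x ⟨a, ha, b, hb, rfl⟩
      have hb0 : b ≤ 0 := by
        induction hb using AddSubmonoid.closure_induction with
        | mem y hy => exact (hα y hy).le
        | zero => simp
        | add y z _ _ hy hz => linarith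
      have := α.le_max' a ha
      linarith
    obtain ⟨k, hk0, hfr⟩ := exists_small_fract (-M) (by linarith)
    set j : ℕ := ⌊(k : ℝ) * Real.sqrt 2⌋.toNat with hj
    have hfl0 : (0 : ℤ) ≤ ⌊(k : ℝ) * Real.sqrt 2⌋ :=
      Int.floor_nonneg.mpr (by positivity)
    have hjc : ((j : ℕ) : ℝ) = (⌊(k : ℝ) * Real.sqrt 2⌋ : ℝ) := by
      rw [hj]; exact_mod_cast congrArg (fun z : ℤ => (z : ℝ)) (Int.toNat_of_nonneg hfl0)
    have hval : (j : ℝ) - (k : ℝ) * Real.sqrt 2 = -Int.fract ((k : ℝ) * Real.sqrt 2) := by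
      rw [hjc, Int.fract]; ring
    have hneg : (j : ℝ) - (k : ℝ) * Real.sqrt 2 < 0 := by
      rw [hval]; linarith [fract_pos hk0]
    have hle := hbound _ (H j k hneg)
    rw [hval] at hle
    linarith
end
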